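/- arXiv:1201.3135 — 5 statements merged into one kernel-verified Lean document; each statement's English description precedes it below -/
import Mathlib

section
/- With p_1(t,x,x) = (1 - e^{-x^2/t})/sqrt(4πt), for every real x one has ∫_0^∞ p_1(t,x,x) dt = |x|. -/
open MeasureTheory Real Filter Set Topology

noncomputable def heatE (u : ℝ) : ℝ := ∫ v in (0:ℝ)..u, Real.exp (-v ^ 2)

lemma heatE_cont_integrand : Continuous fun v : ℝ => Real.exp (-v ^ 2) := by
  continuity

lemma hasDerivAt_heatE (u : ℝ) : HasDerivAt heatE (Real.exp (-u ^ 2)) u :=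
  intervalIntegral.integral_hasDerivAt_right
    (heatE_cont_integrand.intervalIntegrable _ _)
    (heatE_cont_integrand.stronglyMeasurableAtFilter _ _)
    heatE_cont_integrand.continuousAt

lemma heatE_zero : heatE 0 = 0 := by simp [heatE]

lemma tendsto_heatE_atTop : Tendsto heatE atTop (𝓝 (Real.sqrt Real.pi / 2)) := by
  have hi : IntegrableOn (fun v : ℝ => Real.exp (-v ^ 2)) (Ioi 0) := by
    have := (integrable_exp_neg_mul_sq (b := (1:ℝ)) one_pos).integrableOn (s := Ioi 0)
    simpa using this
  have h := intervalIntegral_tendsto_integral_Ioi 0 hi tendsto_id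
  have hval : ∫ v in Ioi (0:ℝ), Real.exp (-v ^ 2) = Real.sqrt Real.pi / 2 := by
    have := integral_gaussian_Ioi 1
    simpa using this
  rw [hval] at h
  exact h

lemma tendsto_sqrt_atTop : Tendsto Real.sqrt atTop atTop := by
  rw [Filter.tendsto_atTop_atTop]
  intro b
  refine ⟨b ^ 2, fun a ha => ?_⟩
  nlinarith [Real.sq_sqrt (le_trans (sq_nonneg b) ha), Real.sqrt_nonneg a]

/-- Derivative of the explicit antiderivative. -/
lemma hasDerivAt_heatG {a t : ℝ} (ha : 0 < a) (ht : 0 < t) :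
    HasDerivAt (fun t : ℝ =>
        2 * Real.sqrt t * (1 - Real.exp (-a / t))
          - 4 * Real.sqrt a * heatE (Real.sqrt (a / t)))
      ((1 - Real.exp (-a / t)) / Real.sqrt t) t := by
  have hst : 0 < Real.sqrt t := Real.sqrt_pos.2 ht
  have hsa : 0 < Real.sqrt a := Real.sqrt_pos.2 ha
  have hat : 0 < a / t := div_pos ha ht
  have hsqrt : HasDerivAt Real.sqrt (1 / (2 * Real.sqrt t)) t :=
    Real.hasDerivAt_sqrt ht.ne'
  -- derivative of t ↦ -a / t
  have hinv : HasDerivAt (fun s : ℝ => -a / s) (-a * -(t ^ 2)⁻¹) t := by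
    simpa [div_eq_mul_inv] using (hasDerivAt_inv ht.ne').const_mul (-a)
  have hexp : HasDerivAt (fun s : ℝ => Real.exp (-a / s))
      (Real.exp (-a / t) * (-a * -(t ^ 2)⁻¹)) t := hinv.exp
  have h1 : HasDerivAt (fun s : ℝ => 2 * Real.sqrt s * (1 - Real.exp (-a / s)))
      (2 * (1 / (2 * Real.sqrt t)) * (1 - Real.exp (-a / t))
        + 2 * Real.sqrt t * (0 - Real.exp (-a / t) * (-a * -(t ^ 2)⁻¹))) t :=
    (hsqrt.const_mul 2).mul ((hasDerivAt_const t (1:ℝ)).sub hexp)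
  -- derivative of t ↦ √(a/t)
  have hinner : HasDerivAt (fun s : ℝ => a / s) (a * -(t ^ 2)⁻¹) t := by
    simpa [div_eq_mul_inv] using (hasDerivAt_inv ht.ne').const_mul a
  have hu : HasDerivAt (fun s : ℝ => Real.sqrt (a / s))
      (1 / (2 * Real.sqrt (a / t)) * (a * -(t ^ 2)⁻¹)) t :=
    (Real.hasDerivAt_sqrt hat.ne').comp t hinner
  have h2 : HasDerivAt (fun s : ℝ => heatE (Real.sqrt (a / s)))
      (Real.exp (-(Real.sqrt (a / t)) ^ 2)
        * (1 / (2 * Real.sqrt (a / t)) * (a * -(t ^ 2)⁻¹))) t :=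
    (hasDerivAt_heatE _).comp t hu
  have htotal := h1.sub (h2.const_mul (4 * Real.sqrt a))
  convert htotal using 1
  all_goals try rfl
  have hsq : (Real.sqrt (a / t)) ^ 2 = a / t := Real.sq_sqrt hat.le
  rw [hsq]
  have hdiv : Real.sqrt (a / t) = Real.sqrt a / Real.sqrt t :=
    Real.sqrt_div ha.le t
  rw [hdiv]
  have ht2 : Real.sqrt t * Real.sqrt t = t := Real.mul_self_sqrt ht.le
  field_simp
  ring_nf

open MeasureTheory

/-- With `p₁(t,x,x) = (1 - e^{-x²/t})/√(4πt)`, for every real `x` one has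
`∫₀^∞ p₁(t,x,x) dt = |x|`. -/
theorem integral_dirichlet_heat_kernel_diagonal (x : ℝ) :
    ∫ t in Set.Ioi (0 : ℝ),
      (1 - Real.exp (-x ^ 2 / t)) / Real.sqrt (4 * Real.pi * t) = |x| := by
  rcases eq_or_ne x 0 with rfl | hx
  · simp
  have ha : 0 < x ^ 2 := by positivity
  set a : ℝ := x ^ 2 with ha'
  have hsa : Real.sqrt a = |x| := Real.sqrt_sq_eq_abs x
  have hπ : 0 < Real.pi := Real.pi_pos
  have h4π : Real.sqrt (4 * Real.pi) = 2 * Real.sqrt Real.pi := by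
    rw [show (4:ℝ) * Real.pi = 2 ^ 2 * Real.pi by ring,
      Real.sqrt_mul (by positivity), Real.sqrt_sq (by norm_num : (0:ℝ) ≤ 2)]
  have h4πpos : 0 < Real.sqrt (4 * Real.pi) := Real.sqrt_pos.2 (by positivity)
  set G : ℝ → ℝ := fun t =>
    (2 * Real.sqrt t * (1 - Real.exp (-a / t))
      - 4 * Real.sqrt a * heatE (Real.sqrt (a / t))) / Real.sqrt (4 * Real.pi)
    with hGdef
  set F : ℝ → ℝ := fun t => if t ≤ 0 then -|x| else G t with hFdef
  have hF0 : F 0 = -|x| := by simp [hFdef]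
  -- F = G eventually near any t > 0 and on atTop
  have hFG : ∀ t : ℝ, 0 < t → F t = G t := fun t ht => by
    simp [hFdef, not_le.2 ht]
  -- continuity at 0 from the right
  have hcont : ContinuousWithinAt F (Set.Ici 0) 0 := by
    rw [← continuousWithinAt_Ioi_iff_Ici]
    have h1 : Tendsto (fun t : ℝ => Real.sqrt t) (nhdsWithin 0 (Set.Ioi 0)) (𝓝 0) := by
      have := (Real.continuous_sqrt.tendsto 0)
      simpa using this.mono_left nhdsWithin_le_nhds
    have hdivtop : Tendsto (fun t : ℝ => a / t) (nhdsWithin 0 (Set.Ioi 0)) atTop := by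
      have : Tendsto (fun t : ℝ => t⁻¹) (nhdsWithin 0 (Set.Ioi 0)) atTop :=
        tendsto_inv_nhdsGT_zero
      simpa [div_eq_mul_inv] using this.const_mul_atTop ha
    have h2 : Tendsto (fun t : ℝ => Real.exp (-a / t)) (nhdsWithin 0 (Set.Ioi 0)) (𝓝 0) := by
      have hbot : Tendsto (fun t : ℝ => -a / t) (nhdsWithin 0 (Set.Ioi 0)) atBot := by
        exact (tendsto_neg_atTop_atBot.comp hdivtop).congr (fun t => by simp [Function.comp, neg_div, div_eq_mul_inv])
      exact Real.tendsto_exp_atBot.comp hbot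
    have h3 : Tendsto (fun t : ℝ => heatE (Real.sqrt (a / t)))
        (nhdsWithin 0 (Set.Ioi 0)) (𝓝 (Real.sqrt Real.pi / 2)) :=
      tendsto_heatE_atTop.comp (_root_.tendsto_sqrt_atTop.comp hdivtop)
    have hGlim : Tendsto G (nhdsWithin 0 (Set.Ioi 0)) (𝓝 (-|x|)) := by
      have := (((h1.const_mul 2).mul ((tendsto_const_nhds (x := (1:ℝ))).sub h2)).sub
        (h3.const_mul (4 * Real.sqrt a))).div_const (Real.sqrt (4 * Real.pi))
      have hval : (2 * 0 * (1 - 0) - 4 * Real.sqrt a * (Real.sqrt Real.pi / 2))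
          / Real.sqrt (4 * Real.pi) = -|x| := by
        rw [h4π, hsa]
        have : Real.sqrt Real.pi ≠ 0 := (Real.sqrt_pos.2 hπ).ne'
        field_simp
        ring
      rw [hval] at this
      exact this
    have : Tendsto F (nhdsWithin 0 (Set.Ioi 0)) (𝓝 (-|x|)) := by
      refine hGlim.congr' ?_
      filter_upwards [self_mem_nhdsWithin] with t ht
      exact (hFG t ht).symm
    simpa [ContinuousWithinAt, hF0] using this
  -- derivative on (0, ∞)
  have hderiv : ∀ t ∈ Set.Ioi (0:ℝ), HasDerivAt F
      ((1 - Real.exp (-a / t)) / Real.sqrt (4 * Real.pi * t)) t := by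
    intro t ht
    have ht : 0 < t := ht
    have hG : HasDerivAt G ((1 - Real.exp (-a / t)) / Real.sqrt t
        / Real.sqrt (4 * Real.pi)) t :=
      (hasDerivAt_heatG ha ht).div_const _
    have heq : F =ᶠ[𝓝 t] G := by
      filter_upwards [eventually_gt_nhds ht] with s hs
      exact hFG s hs
    have : HasDerivAt F ((1 - Real.exp (-a / t)) / Real.sqrt t
        / Real.sqrt (4 * Real.pi)) t := hG.congr_of_eventuallyEq heq
    convert this using 1
    rw [Real.sqrt_mul (by positivity) t, div_div]
    ring_nf
  -- positivity of the integrand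
  have hpos : ∀ t ∈ Set.Ioi (0:ℝ),
      0 ≤ (1 - Real.exp (-a / t)) / Real.sqrt (4 * Real.pi * t) := by
    intro t ht
    have ht : 0 < t := ht
    have h1 : Real.exp (-a / t) ≤ 1 := by
      rw [Real.exp_le_one_iff]
      have : 0 < a / t := div_pos ha ht
      simp only [neg_div]
      linarith
    exact div_nonneg (by linarith) (Real.sqrt_nonneg _)
  -- limit at infinity
  have htop : Tendsto F atTop (𝓝 0) := by
    have hA : Tendsto (fun t : ℝ => 2 * Real.sqrt t * (1 - Real.exp (-a / t)))
        atTop (𝓝 0) := by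
      apply squeeze_zero' (g := fun t : ℝ => 2 * a / Real.sqrt t)
      · filter_upwards [eventually_gt_atTop (0:ℝ)] with t ht
        have h1 : Real.exp (-a / t) ≤ 1 := by
          rw [Real.exp_le_one_iff]
          have : 0 < a / t := div_pos ha ht
          simp only [neg_div]; linarith
        have := Real.sqrt_nonneg t
        nlinarith
      · filter_upwards [eventually_gt_atTop (0:ℝ)] with t ht
        have hst : 0 < Real.sqrt t := Real.sqrt_pos.2 ht
        have ht2 : Real.sqrt t * Real.sqrt t = t := Real.mul_self_sqrt ht.le
        have hle : 1 - Real.exp (-a / t) ≤ a / t := by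
          have := Real.add_one_le_exp (-(a / t))
          have hrw : -a / t = -(a / t) := by ring
          rw [hrw]; linarith
        have h0 : 0 ≤ 1 - Real.exp (-a / t) := by
          have h1 : Real.exp (-a / t) ≤ 1 := by
            rw [Real.exp_le_one_iff]
            have : 0 < a / t := div_pos ha ht
            simp only [neg_div]; linarith
          linarith
        have key : 2 * Real.sqrt t * (1 - Real.exp (-a / t))
            ≤ 2 * Real.sqrt t * (a / t) := by
          apply mul_le_mul_of_nonneg_left hle (by positivity)
        have : 2 * Real.sqrt t * (a / t) = 2 * a / Real.sqrt t := by
          field_simp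
          nlinarith [ht2]
        linarith [key, this.symm ▸ key]
      · have : Tendsto (fun t : ℝ => (Real.sqrt t)⁻¹) atTop (𝓝 0) :=
          _root_.tendsto_sqrt_atTop.inv_tendsto_atTop
        have h := this.const_mul (2 * a)
        simpa [div_eq_mul_inv, mul_zero] using h
    have hB : Tendsto (fun t : ℝ => heatE (Real.sqrt (a / t))) atTop (𝓝 0) := by
      have hdiv : Tendsto (fun t : ℝ => a / t) atTop (𝓝 0) := by
        have := tendsto_inv_atTop_zero (𝕜 := ℝ)
        simpa [div_eq_mul_inv, mul_zero] using this.const_mul a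
      have hsq : Tendsto (fun t : ℝ => Real.sqrt (a / t)) atTop (𝓝 0) := by
        simpa using hdiv.sqrt
      have hE : Tendsto heatE (𝓝 0) (𝓝 0) := by
        have := (hasDerivAt_heatE 0).continuousAt.tendsto
        simpa [heatE_zero] using this
      exact hE.comp hsq
    have hGlim : Tendsto G atTop (𝓝 0) := by
      have h := (hA.sub (hB.const_mul (4 * Real.sqrt a))).div_const
        (Real.sqrt (4 * Real.pi))
      have hval : (0 - 4 * Real.sqrt a * 0) / Real.sqrt (4 * Real.pi) = 0 := by simp
      rw [hval] at h
      rw [hGdef]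
      exact h
    refine hGlim.congr' ?_
    filter_upwards [eventually_gt_atTop (0:ℝ)] with t ht
    exact (hFG t ht).symm
  have := integral_Ioi_of_hasDerivAt_of_nonneg hcont hderiv hpos htop
  rw [this, hF0]
  ring
end

section
/- For any real β and any t > 2, ∫_0^∞ (2π)/((β + ln σ)^2 + π^2) · e^{-σ t} dσ is comparable to 1/((1+t) ln^2(2+t)): there exist constants 0 < C_1 ≤ C_2 (depending on β) with C_1/((1+t) ln^2(2+t)) ≤ ∫_0^∞ 2π e^{-σ t}/((β+ln σ)^2+π^2) dσ ≤ C_2/((1+t) ln^2(2+t)) for all t > 2. -/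
open MeasureTheory

namespace ILLog
open Set
set_option maxHeartbeats 1000000


lemma measurable_f (β t : ℝ) :
    Measurable (fun σ : ℝ => 2 * Real.pi * Real.exp (-σ * t) / ((β + Real.log σ) ^ 2 + Real.pi ^ 2)) := by
  apply Measurable.div
  · exact (measurable_id.neg.mul_const t).exp.const_mul _
  · exact ((measurable_const.add Real.measurable_log).pow_const 2).add measurable_const

lemma integral_exp_Ioi {t : ℝ} (ht : 0 < t) (a : ℝ) :
    ∫ σ in Ioi a, Real.exp (-σ * t) = Real.exp (-a * t) / t := by
  have h := integral_comp_mul_right_Ioi (fun x => Real.exp (-x)) a ht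
  simp only [smul_eq_mul] at h
  calc ∫ σ in Ioi a, Real.exp (-σ * t) = ∫ σ in Ioi a, Real.exp (-(σ * t)) := by
        simp only [neg_mul]
    _ = t⁻¹ * ∫ x in Ioi (a * t), Real.exp (-x) := h
    _ = Real.exp (-a * t) / t := by
        rw [integral_exp_neg_Ioi]; rw [neg_mul]; ring

lemma exp_integrableOn {t : ℝ} (ht : 0 < t) (a : ℝ) :
    IntegrableOn (fun σ : ℝ => Real.exp (-σ * t)) (Ioi a) := by
  have := exp_neg_integrableOn_Ioi a ht
  simpa [mul_comm] using this

lemma f_integrableOn (β : ℝ) {t : ℝ} (ht : 0 < t) (a : ℝ) :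
    IntegrableOn (fun σ : ℝ => 2 * Real.pi * Real.exp (-σ * t) / ((β + Real.log σ) ^ 2 + Real.pi ^ 2))
      (Ioi a) := by
  apply Integrable.mono' (((exp_integrableOn ht a).const_mul (2 / Real.pi)))
    (measurable_f β t).aestronglyMeasurable
  filter_upwards with σ
  have hd : (0:ℝ) < (β + Real.log σ) ^ 2 + Real.pi ^ 2 := by positivity
  rw [Real.norm_eq_abs, abs_div, abs_of_pos hd, abs_of_pos (by positivity : (0:ℝ) < 2 * Real.pi * Real.exp (-σ * t))]
  rw [div_le_iff₀ hd]
  have : Real.pi ^ 2 ≤ (β + Real.log σ) ^ 2 + Real.pi ^ 2 := le_add_of_nonneg_left (sq_nonneg _)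
  calc 2 * Real.pi * Real.exp (-σ * t) = 2 / Real.pi * Real.exp (-σ * t) * Real.pi ^ 2 := by
        field_simp
    _ ≤ 2 / Real.pi * Real.exp (-σ * t) * ((β + Real.log σ) ^ 2 + Real.pi ^ 2) := by
        apply mul_le_mul_of_nonneg_left this (by positivity)



lemma log_two_add_ge_one {t : ℝ} (ht : 2 < t) : 1 ≤ Real.log (2 + t) := by
  rw [Real.le_log_iff_exp_le (by linarith)]
  have := Real.exp_one_lt_d9
  linarith

lemma lower_bound (β : ℝ) {t : ℝ} (ht : 2 < t) :
    (2 * Real.pi * Real.exp (-2) / ((|β| + 1) ^ 2 + Real.pi ^ 2)) /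
        ((1 + t) * (Real.log (2 + t)) ^ 2) ≤
      ∫ σ in Ioi (0 : ℝ),
        2 * Real.pi * Real.exp (-σ * t) / ((β + Real.log σ) ^ 2 + Real.pi ^ 2) := by
  have ht0 : (0:ℝ) < t := by linarith
  set L := Real.log (2 + t) with hLdef
  have hL1 : 1 ≤ L := log_two_add_ge_one ht
  set K := (|β| + 1) ^ 2 + Real.pi ^ 2 with hKdef
  have hK : 0 < K := by positivity
  set c := 2 * Real.pi * Real.exp (-2) / (K * L ^ 2) with hcdef
  have hlogt : Real.log t ≤ L := Real.log_le_log (by linarith) (by linarith)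
  -- pointwise lower bound on Ioc (1/t) (2/t)
  have hpt : ∀ σ ∈ Ioc (1/t) (2/t), c ≤
      2 * Real.pi * Real.exp (-σ * t) / ((β + Real.log σ) ^ 2 + Real.pi ^ 2) := by
    intro σ hσ
    have hσ0 : 0 < σ := lt_trans (by positivity) hσ.1
    have hnum : Real.exp (-2) ≤ Real.exp (-σ * t) := by
      apply Real.exp_le_exp.2
      have : σ * t ≤ 2 := by
        have := hσ.2
        calc σ * t ≤ (2/t) * t := by nlinarith
          _ = 2 := by field_simp
      linarith
    have hlogσ_lb : -Real.log t ≤ Real.log σ := by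
      rw [← Real.log_inv]
      exact Real.log_le_log (by positivity) (by rw [inv_eq_one_div]; exact le_of_lt hσ.1)
    have hlogσ_ub : Real.log σ ≤ 0 := by
      apply Real.log_nonpos (le_of_lt hσ0)
      calc σ ≤ 2/t := hσ.2
        _ ≤ 1 := by rw [div_le_one ht0]; linarith
    have habs : |β + Real.log σ| ≤ (|β| + 1) * L := by
      have h1 : |β + Real.log σ| ≤ |β| + |Real.log σ| := abs_add_le _ _
      have h2 : |Real.log σ| ≤ Real.log t := by
        rw [abs_le]; constructor <;> [exact hlogσ_lb; linarith [Real.log_pos (by linarith : (1:ℝ) < t)]]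
      nlinarith [abs_nonneg β]
    have hden : (β + Real.log σ) ^ 2 + Real.pi ^ 2 ≤ K * L ^ 2 := by
      have h1 : (β + Real.log σ) ^ 2 ≤ ((|β| + 1) * L) ^ 2 := by
        rw [← sq_abs (β + Real.log σ)]
        exact pow_le_pow_left₀ (abs_nonneg _) habs 2
      have hL2 : 1 ≤ L ^ 2 := one_le_pow₀ hL1
      have h2 : Real.pi ^ 2 ≤ Real.pi ^ 2 * L ^ 2 := by nlinarith [sq_nonneg Real.pi]
      rw [hKdef]; nlinarith
    rw [hcdef]
    apply div_le_div₀ (by positivity) (by nlinarith [Real.pi_pos]) (by positivity) hden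
  -- integral over the interval
  have hsub : Ioc (1/t) (2/t) ⊆ Ioi (0:ℝ) := fun x hx => lt_trans (by positivity) hx.1
  have hint : IntegrableOn (fun σ : ℝ => 2 * Real.pi * Real.exp (-σ * t) / ((β + Real.log σ) ^ 2 + Real.pi ^ 2)) (Ioc (1/t) (2/t)) :=
    (f_integrableOn β ht0 0).mono_set hsub
  have hvol : (volume (Ioc (1/t) (2/t))).toReal = 1 / t := by
    rw [Real.volume_Ioc, ENNReal.toReal_ofReal (by rw [show (2:ℝ)/t - 1/t = 1/t by ring]; positivity)]
    ring
  have hstep1 : c * (1/t) ≤ ∫ σ in Ioc (1/t) (2/t),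
      2 * Real.pi * Real.exp (-σ * t) / ((β + Real.log σ) ^ 2 + Real.pi ^ 2) := by
    have := setIntegral_ge_of_const_le measurableSet_Ioc
      (by rw [Real.volume_Ioc]; exact ENNReal.ofReal_ne_top) hpt hint
    rwa [measureReal_def, hvol, smul_eq_mul, mul_comm] at this
  have hstep2 : (∫ σ in Ioc (1/t) (2/t),
      2 * Real.pi * Real.exp (-σ * t) / ((β + Real.log σ) ^ 2 + Real.pi ^ 2)) ≤
      ∫ σ in Ioi (0:ℝ),
      2 * Real.pi * Real.exp (-σ * t) / ((β + Real.log σ) ^ 2 + Real.pi ^ 2) := by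
    apply setIntegral_mono_set (f_integrableOn β ht0 0)
    · filter_upwards with σ
      have : (0:ℝ) < (β + Real.log σ) ^ 2 + Real.pi ^ 2 := by positivity
      positivity
    · exact HasSubset.Subset.eventuallyLE hsub
  refine le_trans ?_ (le_trans hstep1 hstep2)
  have hpi := Real.pi_pos
  have hrw : c * (1/t) = (2 * Real.pi * Real.exp (-2)) / (K * L ^ 2 * t) := by
    rw [hcdef]; field_simp
  rw [hrw, div_div]
  apply div_le_div_of_nonneg_left (by positivity) (by positivity)
  nlinarith [mul_pos hK (by positivity : (0:ℝ) < L ^ 2)]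


lemma integral_const_mul_exp (c : ℝ) {t : ℝ} (ht : 0 < t) (a : ℝ) :
    ∫ σ in Ioi a, c * Real.exp (-σ * t) = c * (Real.exp (-a * t) / t) := by
  rw [integral_const_mul, integral_exp_Ioi ht]

lemma f_le (β t σ : ℝ) :
    2 * Real.pi * Real.exp (-σ * t) / ((β + Real.log σ) ^ 2 + Real.pi ^ 2) ≤
      2 / Real.pi * Real.exp (-σ * t) := by
  have hpi := Real.pi_pos
  have hd : (0:ℝ) < (β + Real.log σ) ^ 2 + Real.pi ^ 2 := by positivity
  rw [div_le_iff₀ hd]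
  have h1 : Real.pi ^ 2 ≤ (β + Real.log σ) ^ 2 + Real.pi ^ 2 := le_add_of_nonneg_left (sq_nonneg _)
  calc 2 * Real.pi * Real.exp (-σ * t) = 2 / Real.pi * Real.exp (-σ * t) * Real.pi ^ 2 := by
        field_simp
    _ ≤ 2 / Real.pi * Real.exp (-σ * t) * ((β + Real.log σ) ^ 2 + Real.pi ^ 2) :=
        mul_le_mul_of_nonneg_left h1 (by positivity)

lemma trivial_upper (β : ℝ) {t : ℝ} (ht : 0 < t) :
    (∫ σ in Ioi (0:ℝ), 2 * Real.pi * Real.exp (-σ * t) / ((β + Real.log σ) ^ 2 + Real.pi ^ 2)) ≤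
      2 / Real.pi / t := by
  have h := setIntegral_mono_on (f_integrableOn β ht 0)
    ((exp_integrableOn ht 0).const_mul (2 / Real.pi)) measurableSet_Ioi
    (fun σ _ => f_le β t σ)
  calc (∫ σ in Ioi (0:ℝ), 2 * Real.pi * Real.exp (-σ * t) / ((β + Real.log σ) ^ 2 + Real.pi ^ 2))
      ≤ ∫ σ in Ioi (0:ℝ), 2 / Real.pi * Real.exp (-σ * t) := h
    _ = 2 / Real.pi * (Real.exp (-0 * t) / t) := by
        rw [integral_const_mul_exp _ ht]
    _ = 2 / Real.pi / t := by norm_num [div_eq_mul_inv]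

lemma add_div_div_aux (p l t : ℝ) (hp : p ≠ 0) (hl : l ≠ 0) (ht : t ≠ 0) :
    32 * p / l ^ 2 / t + 32 / p / l ^ 2 / t = (32 * p + 32 / p) / (t * l ^ 2) := by
  field_simp

lemma upper_large (β : ℝ) {t : ℝ} (ht3 : 3 ≤ t) (hT : Real.exp (4 * (|β| + 1)) ≤ t) :
    (∫ σ in Ioi (0:ℝ), 2 * Real.pi * Real.exp (-σ * t) / ((β + Real.log σ) ^ 2 + Real.pi ^ 2)) ≤
      (256 * Real.pi + 256 / Real.pi) / ((1 + t) * (Real.log (2 + t)) ^ 2) := by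
  have hpi := Real.pi_pos
  have ht0 : (0:ℝ) < t := by linarith
  have ht1 : (1:ℝ) < t := by linarith
  have hlogt4 : 4 * (|β| + 1) ≤ Real.log t := by
    rw [← Real.log_exp (4 * (|β| + 1))]; exact Real.log_le_log (Real.exp_pos _) hT
  have hlogt_pos : 0 < Real.log t := by nlinarith [abs_nonneg β]
  set a := (Real.sqrt t)⁻¹ with hadef
  have hst : 0 < Real.sqrt t := Real.sqrt_pos.2 ht0
  have ha : 0 < a := by positivity
  -- split the integral
  have hsplit : (∫ σ in Ioi (0:ℝ), 2 * Real.pi * Real.exp (-σ * t) / ((β + Real.log σ) ^ 2 + Real.pi ^ 2)) =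
      (∫ σ in Ioc (0:ℝ) a, 2 * Real.pi * Real.exp (-σ * t) / ((β + Real.log σ) ^ 2 + Real.pi ^ 2)) +
      ∫ σ in Ioi a, 2 * Real.pi * Real.exp (-σ * t) / ((β + Real.log σ) ^ 2 + Real.pi ^ 2) := by
    rw [← setIntegral_union (Ioc_disjoint_Ioi le_rfl) measurableSet_Ioi
      ((f_integrableOn β ht0 0).mono_set Ioc_subset_Ioi_self) (f_integrableOn β ht0 a),
      Ioc_union_Ioi_eq_Ioi (le_of_lt ha)]
  -- piece 1
  have hp1 : (∫ σ in Ioc (0:ℝ) a, 2 * Real.pi * Real.exp (-σ * t) / ((β + Real.log σ) ^ 2 + Real.pi ^ 2)) ≤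
      32 * Real.pi / (Real.log t) ^ 2 / t := by
    have hpt : ∀ σ ∈ Ioc (0:ℝ) a,
        2 * Real.pi * Real.exp (-σ * t) / ((β + Real.log σ) ^ 2 + Real.pi ^ 2) ≤
        32 * Real.pi / (Real.log t) ^ 2 * Real.exp (-σ * t) := by
      intro σ hσ
      have hσ0 : 0 < σ := hσ.1
      have hloga : Real.log a = -(Real.log t / 2) := by
        rw [hadef, Real.log_inv, Real.log_sqrt (le_of_lt ht0)]
      have hlogσ : Real.log σ ≤ -(Real.log t / 2) := by
        rw [← hloga]; exact Real.log_le_log hσ0 hσ.2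
      have hkey : β + Real.log σ ≤ -(Real.log t / 4) := by
        have hb : β ≤ |β| := le_abs_self β
        linarith
      have hsq : (Real.log t / 4) ^ 2 ≤ (β + Real.log σ) ^ 2 := by
        nlinarith [hlogt_pos]
      have hd : (0:ℝ) < (β + Real.log σ) ^ 2 + Real.pi ^ 2 := by positivity
      rw [div_le_iff₀ hd]
      have hsq' : (Real.log t) ^ 2 / 16 ≤ (β + Real.log σ) ^ 2 + Real.pi ^ 2 := by
        nlinarith [sq_nonneg Real.pi]
      calc 2 * Real.pi * Real.exp (-σ * t)
          = 32 * Real.pi / (Real.log t) ^ 2 * Real.exp (-σ * t) * ((Real.log t) ^ 2 / 16) := by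
            field_simp; ring
        _ ≤ 32 * Real.pi / (Real.log t) ^ 2 * Real.exp (-σ * t) * ((β + Real.log σ) ^ 2 + Real.pi ^ 2) :=
            mul_le_mul_of_nonneg_left hsq' (by positivity)
    calc (∫ σ in Ioc (0:ℝ) a, 2 * Real.pi * Real.exp (-σ * t) / ((β + Real.log σ) ^ 2 + Real.pi ^ 2))
        ≤ ∫ σ in Ioc (0:ℝ) a, 32 * Real.pi / (Real.log t) ^ 2 * Real.exp (-σ * t) :=
          setIntegral_mono_on ((f_integrableOn β ht0 0).mono_set Ioc_subset_Ioi_self)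
            (((exp_integrableOn ht0 0).mono_set Ioc_subset_Ioi_self).const_mul _)
            measurableSet_Ioc hpt
      _ ≤ ∫ σ in Ioi (0:ℝ), 32 * Real.pi / (Real.log t) ^ 2 * Real.exp (-σ * t) := by
          apply setIntegral_mono_set ((exp_integrableOn ht0 0).const_mul _)
          · filter_upwards with σ; positivity
          · exact HasSubset.Subset.eventuallyLE Ioc_subset_Ioi_self
      _ = 32 * Real.pi / (Real.log t) ^ 2 * (Real.exp (-0 * t) / t) := by
          rw [integral_const_mul_exp _ ht0]
      _ = 32 * Real.pi / (Real.log t) ^ 2 / t := by norm_num [div_eq_mul_inv]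
  -- piece 2
  have hat : a * t = Real.sqrt t := by
    rw [hadef, inv_mul_eq_div, div_eq_iff (ne_of_gt hst)]
    exact (Real.mul_self_sqrt (le_of_lt ht0)).symm
  have hp2 : (∫ σ in Ioi a, 2 * Real.pi * Real.exp (-σ * t) / ((β + Real.log σ) ^ 2 + Real.pi ^ 2)) ≤
      32 / Real.pi / (Real.log t) ^ 2 / t := by
    have h1 : (∫ σ in Ioi a, 2 * Real.pi * Real.exp (-σ * t) / ((β + Real.log σ) ^ 2 + Real.pi ^ 2)) ≤
        ∫ σ in Ioi a, 2 / Real.pi * Real.exp (-σ * t) :=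
      setIntegral_mono_on (f_integrableOn β ht0 a)
        ((exp_integrableOn ht0 a).const_mul _) measurableSet_Ioi (fun σ _ => f_le β t σ)
    have h2 : (∫ σ in Ioi a, 2 / Real.pi * Real.exp (-σ * t)) =
        2 / Real.pi * (Real.exp (-Real.sqrt t) / t) := by
      rw [integral_const_mul, integral_exp_Ioi ht0, neg_mul, hat]
    -- exp (-√t) ≤ 16 / (log t)^2
    have hlog_le : Real.log t ≤ 2 * Real.sqrt t := by
      have h3 : Real.log (Real.sqrt t) = Real.log t / 2 := Real.log_sqrt (le_of_lt ht0)
      have := Real.log_le_sub_one_of_pos hst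
      nlinarith
    have hlogsq : (Real.log t) ^ 2 ≤ 4 * t := by
      have h4 : (Real.sqrt t) ^ 2 = t := Real.sq_sqrt (le_of_lt ht0)
      nlinarith
    have hexp_ge : t / 4 ≤ Real.exp (Real.sqrt t) := by
      have h5 : Real.sqrt t / 2 + 1 ≤ Real.exp (Real.sqrt t / 2) := by
        have := Real.add_one_le_exp (Real.sqrt t / 2); linarith
      have h6 : Real.exp (Real.sqrt t) = Real.exp (Real.sqrt t / 2) * Real.exp (Real.sqrt t / 2) := by
        rw [← Real.exp_add]; ring_nf
      have h4 : (Real.sqrt t) ^ 2 = t := Real.sq_sqrt (le_of_lt ht0)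
      nlinarith [Real.exp_pos (Real.sqrt t / 2)]
    have hexp_le : Real.exp (-Real.sqrt t) ≤ 16 / (Real.log t) ^ 2 := by
      have he : 0 < Real.exp (Real.sqrt t) := Real.exp_pos _
      have h7 : Real.exp (-Real.sqrt t) ≤ 4 / t := by
        rw [Real.exp_neg, inv_le_comm₀ he (by positivity), inv_div]
        exact hexp_ge
      have h8 : 4 / t ≤ 16 / (Real.log t) ^ 2 := by
        rw [div_le_div_iff₀ ht0 (by positivity)]
        nlinarith
      linarith
    calc (∫ σ in Ioi a, 2 * Real.pi * Real.exp (-σ * t) / ((β + Real.log σ) ^ 2 + Real.pi ^ 2))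
        ≤ 2 / Real.pi * (Real.exp (-Real.sqrt t) / t) := by rw [← h2]; exact h1
      _ ≤ 2 / Real.pi * ((16 / (Real.log t) ^ 2) / t) := by gcongr
      _ = 32 / Real.pi / (Real.log t) ^ 2 / t := by
          field_simp; ring
  -- combine
  have hLpos : 0 < Real.log (2 + t) := Real.log_pos (by linarith)
  have hL2 : Real.log (2 + t) ≤ 2 * Real.log t := by
    have h9 : (2 + t) ≤ t ^ 2 := by nlinarith
    calc Real.log (2 + t) ≤ Real.log (t ^ 2) := Real.log_le_log (by linarith) h9
      _ = 2 * Real.log t := by rw [Real.log_pow]; norm_num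
  have hL2sq : (Real.log (2 + t)) ^ 2 ≤ 4 * (Real.log t) ^ 2 := by nlinarith
  have key : (1 + t) * (Real.log (2 + t)) ^ 2 ≤ 8 * (t * (Real.log t) ^ 2) := by
    nlinarith [mul_le_mul_of_nonneg_left hL2sq (by linarith : (0:ℝ) ≤ 1 + t), sq_nonneg (Real.log t)]
  have heq : 32 * Real.pi / (Real.log t) ^ 2 / t + 32 / Real.pi / (Real.log t) ^ 2 / t =
      (32 * Real.pi + 32 / Real.pi) / (t * (Real.log t) ^ 2) :=
    add_div_div_aux Real.pi (Real.log t) t (ne_of_gt hpi) (ne_of_gt hlogt_pos) (ne_of_gt ht0)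
  rw [hsplit]
  calc (∫ σ in Ioc (0:ℝ) a, 2 * Real.pi * Real.exp (-σ * t) / ((β + Real.log σ) ^ 2 + Real.pi ^ 2)) +
      (∫ σ in Ioi a, 2 * Real.pi * Real.exp (-σ * t) / ((β + Real.log σ) ^ 2 + Real.pi ^ 2))
      ≤ 32 * Real.pi / (Real.log t) ^ 2 / t + 32 / Real.pi / (Real.log t) ^ 2 / t := add_le_add hp1 hp2
    _ = (32 * Real.pi + 32 / Real.pi) / (t * (Real.log t) ^ 2) := heq
    _ ≤ (256 * Real.pi + 256 / Real.pi) / ((1 + t) * (Real.log (2 + t)) ^ 2) := by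
        rw [div_le_div_iff₀ (by positivity) (by positivity)]
        have hpos : (0:ℝ) ≤ 32 * Real.pi + 32 / Real.pi := by positivity
        have h10 := mul_le_mul_of_nonneg_left key hpos
        have h11 : (32 * Real.pi + 32 / Real.pi) * (8 * (t * (Real.log t) ^ 2)) =
            (256 * Real.pi + 256 / Real.pi) * (t * (Real.log t) ^ 2) := by ring
        linarith

end ILLog

open ILLog Set in
/-- For any real `β` and `t > 2`, the integral
`∫₀^∞ 2π e^{-σt}/((β + ln σ)² + π²) dσ` is comparable to `1/((1+t) ln²(2+t))`. -/
theorem inverse_laplace_log_asymptotics (β : ℝ) :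
    ∃ C₁ C₂ : ℝ, 0 < C₁ ∧ C₁ ≤ C₂ ∧
      ∀ t : ℝ, 2 < t →
        C₁ / ((1 + t) * (Real.log (2 + t)) ^ 2) ≤
          (∫ σ in Set.Ioi (0 : ℝ),
            2 * Real.pi * Real.exp (-σ * t) / ((β + Real.log σ) ^ 2 + Real.pi ^ 2)) ∧
        (∫ σ in Set.Ioi (0 : ℝ),
            2 * Real.pi * Real.exp (-σ * t) / ((β + Real.log σ) ^ 2 + Real.pi ^ 2)) ≤
          C₂ / ((1 + t) * (Real.log (2 + t)) ^ 2) := by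
  have hpi := Real.pi_pos
  set T : ℝ := max 3 (Real.exp (4 * (|β| + 1))) with hTdef
  have hT3 : (3:ℝ) ≤ T := le_max_left _ _
  have hlogT : 0 < Real.log (2 + T) := Real.log_pos (by linarith)
  set C₁ : ℝ := 2 * Real.pi * Real.exp (-2) / ((|β| + 1) ^ 2 + Real.pi ^ 2) with hC1
  set Ca : ℝ := 256 * Real.pi + 256 / Real.pi with hCa
  set Cb : ℝ := (1 + T) * (Real.log (2 + T)) ^ 2 / Real.pi with hCb
  have hC1pos : 0 < C₁ := by rw [hC1]; positivity
  have hCapos : 0 < Ca := by rw [hCa]; positivity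
  have hCbpos : 0 < Cb := by rw [hCb]; positivity
  refine ⟨C₁, C₁ + Ca + Cb, hC1pos, by linarith, ?_⟩
  intro t ht
  have ht0 : (0:ℝ) < t := by linarith
  have hLpos : 0 < Real.log (2 + t) := Real.log_pos (by linarith)
  have hD : 0 < (1 + t) * (Real.log (2 + t)) ^ 2 := by positivity
  constructor
  · exact lower_bound β ht
  · rcases le_or_gt T t with hcase | hcase
    · -- large t
      have h := upper_large β (le_trans hT3 hcase)
        (le_trans (le_max_right 3 (Real.exp (4 * (|β| + 1)))) hcase)
      refine le_trans h ((div_le_div_iff_of_pos_right hD).2 (by linarith [hCa.le]))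
    · -- small t
      have h := trivial_upper β ht0
      have hstep : 2 / Real.pi / t ≤ Cb / ((1 + t) * (Real.log (2 + t)) ^ 2) := ?_
      · exact le_trans h (le_trans hstep ((div_le_div_iff_of_pos_right hD).2 (by linarith)))
      have hm : (1 + t) * (Real.log (2 + t)) ^ 2 ≤ (1 + T) * (Real.log (2 + T)) ^ 2 := by
        apply mul_le_mul (by linarith)
          (pow_le_pow_left₀ (le_of_lt hLpos)
            (Real.log_le_log (by linarith) (by linarith)) 2)
          (by positivity) (by linarith)
      rw [div_le_div_iff₀ ht0 hD]
      have e1 : 2 / Real.pi * ((1 + t) * (Real.log (2 + t)) ^ 2) ≤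
          2 / Real.pi * ((1 + T) * (Real.log (2 + T)) ^ 2) :=
        mul_le_mul_of_nonneg_left hm (by positivity)
      have e2 : 2 / Real.pi * ((1 + T) * (Real.log (2 + T)) ^ 2) = Cb * 2 := by
        rw [hCb]; ring
      have e3 : Cb * 2 ≤ Cb * t := mul_le_mul_of_nonneg_left (by linarith) (le_of_lt hCbpos)
      linarith
end

section
/- For the hierarchical Laplacian with parameters ν ≥ 2 and 0 < p < 1, and spectral dimension s_h = 2 ln ν / ln(1/p), there exist positive constants C_1, C_2 such that C_1 t^{-s_h/2} ≤ p(t,x,x) ≤ C_2 t^{-s_h/2} for all t ≥ 1, where p(t,x,x) = (1 - 1/ν) Σ_{s=0}^∞ e^{-p^s t} ν^{-s}. -/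
lemma aux_pow_le_factorial_mul_exp (u : ℝ) (hu : 0 ≤ u) (k : ℕ) :
    u ^ k ≤ k.factorial * Real.exp u := by
  have h := Real.sum_le_exp_of_nonneg hu (k + 1)
  have h2 : u ^ k / k.factorial ≤ ∑ i ∈ Finset.range (k + 1), u ^ i / i.factorial :=
    Finset.single_le_sum (f := fun i => u ^ i / i.factorial)
      (fun i _ => by positivity) (Finset.self_mem_range_succ k)
  have h3 := h2.trans h
  have hk : (0:ℝ) < k.factorial := by positivity
  rw [div_le_iff₀ hk] at h3
  linarith

set_option maxHeartbeats 1000000 in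
/-- Two-sided power-law bound for the hierarchical diagonal heat kernel:
with spectral dimension `s_h = 2 ln ν / ln(1/p)`, one has
`p(t,x,x) ≍ t^{-s_h/2}` for `t ≥ 1`. -/
theorem hierarchical_heat_kernel_power_law
    (ν p : ℝ) (hν : 2 ≤ ν) (hp0 : 0 < p) (hp1 : p < 1) :
    ∃ C₁ C₂ : ℝ, 0 < C₁ ∧ 0 < C₂ ∧
      ∀ t : ℝ, 1 ≤ t →
        C₁ * t ^ (-(2 * Real.log ν / Real.log (1 / p)) / 2) ≤
          (1 - 1 / ν) * ∑' s : ℕ, Real.exp (-(p ^ s) * t) / ν ^ s ∧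
        (1 - 1 / ν) * ∑' s : ℕ, Real.exp (-(p ^ s) * t) / ν ^ s ≤
          C₂ * t ^ (-(2 * Real.log ν / Real.log (1 / p)) / 2) := by
  have hν0 : (0:ℝ) < ν := by linarith
  have hν1 : (1:ℝ) < ν := by linarith
  set M : ℝ := Real.log (1 / p) with hMdef
  set L : ℝ := Real.log ν with hLdef
  have hM0 : 0 < M := Real.log_pos (by rw [lt_div_iff₀ hp0]; linarith)
  have hL0 : 0 < L := Real.log_pos hν1
  set α : ℝ := L / M with hαdef
  have hα0 : 0 < α := div_pos hL0 hM0
  have hLαM : L = α * M := by rw [hαdef]; field_simp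
  -- p = exp (-M), ν = exp L
  have hpM : p = Real.exp (-M) := by
    rw [hMdef, Real.log_div one_ne_zero (ne_of_gt hp0), Real.log_one, neg_sub, sub_zero,
      Real.exp_log hp0]
  have hνL : ν = Real.exp L := (Real.exp_log hν0).symm
  -- exponent simplification
  have hexp_eq : -(2 * L / M) / 2 = -α := by rw [hαdef]; ring
  set k : ℕ := ⌈α⌉₊ + 1 with hkdef
  have hkα : α + 1 ≤ (k:ℕ) := by
    push_cast [hkdef]
    have := Nat.le_ceil α
    linarith
  have hν2 : 1 - 1/ν > 0 := by
    have : 1/ν < 1 := by rw [div_lt_one hν0]; linarith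
    linarith
  have hr0 : (0:ℝ) < Real.exp (-M) := Real.exp_pos _
  have hr1 : Real.exp (-M) < 1 := by
    rw [Real.exp_lt_one_iff]; linarith
  refine ⟨(1 - 1/ν) * Real.exp (-1) / ν,
    (k.factorial : ℝ) / (1 - Real.exp (-M)) + 2, ?_, ?_, ?_⟩
  · positivity
  · have : (0:ℝ) < 1 - Real.exp (-M) := by linarith
    positivity
  intro t ht
  have ht0 : (0:ℝ) < t := by linarith
  have hlt0 : 0 ≤ Real.log t := Real.log_nonneg ht
  have htα : t ^ (-(2 * L / M) / 2) = Real.exp (-(α * Real.log t)) := by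
    rw [hexp_eq, Real.rpow_def_of_pos ht0]
    congr 1; ring
  set x : ℝ := Real.log t / M with hxdef
  have hx0 : 0 ≤ x := by positivity
  set s₀ : ℕ := ⌈x⌉₊ with hs₀def
  have hs₀x : x ≤ s₀ := Nat.le_ceil x
  have hs₀x' : (s₀:ℝ) < x + 1 := Nat.ceil_lt_add_one hx0
  have hxM : x * M = Real.log t := by rw [hxdef]; field_simp
  -- the summand
  set f : ℕ → ℝ := fun s => Real.exp (-(p ^ s) * t) / ν ^ s with hfdef
  have hf_nonneg : ∀ s, 0 ≤ f s := fun s => by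
    have : (0:ℝ) < ν ^ s := by positivity
    positivity
  have hf_le : ∀ s, f s ≤ (1/ν) ^ s := by
    intro s
    have h1 : Real.exp (-(p ^ s) * t) ≤ 1 := by
      rw [Real.exp_le_one_iff]
      have : (0:ℝ) < p ^ s := by positivity
      nlinarith
    rw [hfdef, div_pow, one_pow]
    dsimp only
    gcongr
  have hgeo : Summable (fun s : ℕ => (1/ν) ^ s) := by
    apply summable_geometric_of_lt_one (by positivity)
    rw [div_lt_one hν0]; linarith
  have hsum : Summable f := Summable.of_nonneg_of_le hf_nonneg hf_le hgeo
  -- rewrite f in exponential form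
  have hf_exp : ∀ s : ℕ, f s = Real.exp (-(Real.exp (Real.log t - s * M)) - s * L) := by
    intro s
    have hps : p ^ s * t = Real.exp (Real.log t - s * M) := by
      rw [hpM, ← Real.exp_nat_mul,
        show Real.log t - s * M = (s : ℝ) * (-M) + Real.log t by ring,
        Real.exp_add, Real.exp_log ht0]
    have hνs : (ν:ℝ) ^ s = Real.exp (s * L) := by
      rw [hνL, ← Real.exp_nat_mul]
    have hps' : -(p ^ s) * t = -(Real.exp (Real.log t - s * M)) := by
      rw [← hps]; ring
    rw [hfdef]
    dsimp only
    rw [hps', hνs, div_eq_mul_inv, ← Real.exp_neg, ← Real.exp_add]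
    congr 1
  constructor
  · -- lower bound
    have hterm : Real.exp (-1) / ν * Real.exp (-(α * Real.log t)) ≤ f s₀ := by
      rw [hf_exp s₀]
      have h1 : Real.log t - s₀ * M ≤ 0 := by nlinarith
      have h2 : Real.exp (Real.log t - s₀ * M) ≤ 1 := Real.exp_le_one_iff.mpr h1
      have h3 : (s₀:ℝ) * L ≤ α * Real.log t + L := by
        rw [hLαM]; nlinarith
      have : Real.exp (-1) / ν * Real.exp (-(α * Real.log t))
          = Real.exp (-1 - (α * Real.log t) - L) := by
        rw [hνL, div_eq_mul_inv, ← Real.exp_neg, ← Real.exp_add, ← Real.exp_add]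
        congr 1; ring
      rw [this]
      apply Real.exp_le_exp.mpr
      linarith
    have hle : f s₀ ≤ ∑' s, f s := hsum.le_tsum s₀ (fun i _ => hf_nonneg i)
    rw [htα]
    calc (1 - 1/ν) * Real.exp (-1) / ν * Real.exp (-(α * Real.log t))
        = (1 - 1/ν) * (Real.exp (-1) / ν * Real.exp (-(α * Real.log t))) := by ring
      _ ≤ (1 - 1/ν) * f s₀ := by
          apply mul_le_mul_of_nonneg_left (hterm) (le_of_lt hν2)
      _ ≤ (1 - 1/ν) * ∑' s, f s := by
          apply mul_le_mul_of_nonneg_left hle (le_of_lt hν2)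
  · -- upper bound
    rw [htα]
    have hsplit := (hsum.sum_add_tsum_nat_add (f := f) s₀).symm
    -- tail bound
    have htail : (∑' i : ℕ, f (i + s₀)) ≤ 2 * Real.exp (-(α * Real.log t)) := by
      have h1 : (∑' i : ℕ, f (i + s₀)) ≤ ∑' i : ℕ, (1/ν) ^ (i + s₀) := by
        apply Summable.tsum_le_tsum (fun i => hf_le _)
        · exact (summable_nat_add_iff s₀).2 hsum
        · exact (summable_nat_add_iff s₀).2 hgeo
      have h2 : (∑' i : ℕ, (1/ν) ^ (i + s₀)) = (1 - 1/ν)⁻¹ * (1/ν) ^ s₀ := by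
        simp only [pow_add]
        rw [tsum_mul_right, tsum_geometric_of_lt_one (by positivity)
          (by rw [div_lt_one hν0]; linarith)]
      have h3 : (1 - 1/ν)⁻¹ ≤ 2 := by
        rw [inv_le_iff_one_le_mul₀ hν2]
        have : 1/ν ≤ 1/2 := by
          rw [div_le_div_iff₀ hν0 (by norm_num)]; linarith
        linarith
      have h4 : (1/ν : ℝ) ^ s₀ ≤ Real.exp (-(α * Real.log t)) := by
        have : (1/ν : ℝ) ^ s₀ = Real.exp (-(s₀ * L)) := by
          rw [hνL, one_div, ← Real.exp_neg, ← Real.exp_nat_mul]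
          congr 1; ring
        rw [this]
        apply Real.exp_le_exp.mpr
        have : α * Real.log t ≤ s₀ * L := by rw [hLαM, ← hxM]; nlinarith
        linarith
      have h5 : (0:ℝ) ≤ (1/ν) ^ s₀ := by positivity
      calc (∑' i : ℕ, f (i + s₀)) ≤ (1 - 1/ν)⁻¹ * (1/ν) ^ s₀ := by rw [← h2]; exact h1
        _ ≤ 2 * (1/ν) ^ s₀ := mul_le_mul_of_nonneg_right h3 h5
        _ ≤ 2 * Real.exp (-(α * Real.log t)) := by linarith
    -- head bound
    have hhead : (∑ s ∈ Finset.range s₀, f s)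
        ≤ (k.factorial : ℝ) / (1 - Real.exp (-M)) * Real.exp (-(α * Real.log t)) := by
      have hterm : ∀ s ∈ Finset.range s₀,
          f s ≤ (k.factorial : ℝ) * (Real.exp (-M)) ^ (s₀ - 1 - s)
              * Real.exp (-(α * Real.log t)) := by
        intro s hs
        rw [Finset.mem_range] at hs
        have hs1 : 1 ≤ s₀ := Nat.one_le_iff_ne_zero.mpr (by omega)
        have hcast : ((s₀ - 1 - s : ℕ) : ℝ) = (s₀:ℝ) - 1 - s := by
          have h1 : s ≤ s₀ - 1 := by omega
          rw [Nat.cast_sub h1, Nat.cast_sub hs1]; norm_num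
        set b : ℝ := (s₀:ℝ) - 1 - s with hbdef
        set a : ℝ := Real.log t - s * M with hadef
        have hsx : (s:ℝ) < x := by
          have := (Nat.lt_ceil (n := s) (a := x)).mp (by rwa [← hs₀def])
          exact this
        have hb0 : 0 ≤ b := by
          have : (s:ℝ) ≤ (s₀:ℝ) - 1 := by
            have : (s:ℝ) + 1 ≤ (s₀:ℝ) := by exact_mod_cast hs
            linarith
          simp [hbdef]; linarith
        have hba : b * M ≤ a := by
          have hxs : b < x - s := by
            have : (s₀:ℝ) - 1 < x := by linarith
            simp [hbdef]; linarith
          have : b * M ≤ (x - s) * M := by nlinarith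
          calc b * M ≤ (x - s) * M := this
            _ = Real.log t - s * M := by rw [← hxM]; ring
        have ha0 : 0 ≤ a := le_trans (by positivity) hba
        -- key exponential inequality
        have hkey : Real.exp (k * a - Real.exp a) ≤ (k.factorial : ℝ) := by
          have h1 : (Real.exp a) ^ k ≤ (k.factorial : ℝ) * Real.exp (Real.exp a) :=
            aux_pow_le_factorial_mul_exp _ (le_of_lt (Real.exp_pos a)) k
          rw [← Real.exp_nat_mul] at h1
          rw [Real.exp_sub, div_le_iff₀ (Real.exp_pos _)]
          linarith
        have hlin : b * M + α * Real.log t ≤ k * a + s * L := by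
          have h1 : (k:ℝ) - α ≥ 1 := by linarith
          have h2 : Real.log t = a + s * M := by rw [hadef]; ring
          rw [hLαM, h2]
          have : b * M ≤ ((k:ℝ) - α) * a := by nlinarith
          nlinarith
        rw [hf_exp s]
        calc Real.exp (-(Real.exp a) - s * L)
            = Real.exp (k * a - Real.exp a) * Real.exp (-(k * a) - s * L) := by
              rw [← Real.exp_add]; congr 1; ring
          _ ≤ (k.factorial : ℝ) * Real.exp (-(k * a) - s * L) := by
              apply mul_le_mul_of_nonneg_right hkey (le_of_lt (Real.exp_pos _))
          _ ≤ (k.factorial : ℝ) * Real.exp (-(b * M) - α * Real.log t) := by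
              apply mul_le_mul_of_nonneg_left _ (by positivity)
              apply Real.exp_le_exp.mpr
              linarith
          _ = (k.factorial : ℝ) * (Real.exp (-M)) ^ (s₀ - 1 - s)
              * Real.exp (-(α * Real.log t)) := by
              rw [← Real.exp_nat_mul, mul_assoc, ← Real.exp_add, hcast]
              congr 2; rw [hbdef]; ring
      calc (∑ s ∈ Finset.range s₀, f s)
          ≤ ∑ s ∈ Finset.range s₀, (k.factorial : ℝ) * (Real.exp (-M)) ^ (s₀ - 1 - s)
              * Real.exp (-(α * Real.log t)) := Finset.sum_le_sum hterm
        _ = (k.factorial : ℝ) * Real.exp (-(α * Real.log t))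
              * ∑ s ∈ Finset.range s₀, (Real.exp (-M)) ^ (s₀ - 1 - s) := by
            rw [Finset.mul_sum]; apply Finset.sum_congr rfl; intro i _; ring
        _ = (k.factorial : ℝ) * Real.exp (-(α * Real.log t))
              * ∑ s ∈ Finset.range s₀, (Real.exp (-M)) ^ s := by
            rw [Finset.sum_range_reflect (fun j => (Real.exp (-M)) ^ j) s₀]
        _ ≤ (k.factorial : ℝ) * Real.exp (-(α * Real.log t)) * (1 - Real.exp (-M))⁻¹ := by
            apply mul_le_mul_of_nonneg_left _ (by positivity)
            calc (∑ s ∈ Finset.range s₀, (Real.exp (-M)) ^ s)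
                ≤ ∑' s : ℕ, (Real.exp (-M)) ^ s :=
                  Summable.sum_le_tsum _ (fun i _ => by positivity)
                    (summable_geometric_of_lt_one (le_of_lt hr0) hr1)
              _ = (1 - Real.exp (-M))⁻¹ := tsum_geometric_of_lt_one (le_of_lt hr0) hr1
        _ = (k.factorial : ℝ) / (1 - Real.exp (-M)) * Real.exp (-(α * Real.log t)) := by
            ring
    have hsum_nonneg : 0 ≤ ∑' s, f s := tsum_nonneg hf_nonneg
    have h1ν : (0:ℝ) ≤ 1/ν := by positivity
    calc (1 - 1/ν) * ∑' s, f s ≤ ∑' s, f s := by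
          nlinarith [mul_nonneg h1ν hsum_nonneg]
      _ = (∑ s ∈ Finset.range s₀, f s) + ∑' i : ℕ, f (i + s₀) := hsplit
      _ ≤ (k.factorial : ℝ) / (1 - Real.exp (-M)) * Real.exp (-(α * Real.log t))
          + 2 * Real.exp (-(α * Real.log t)) := add_le_add hhead htail
      _ = ((k.factorial : ℝ) / (1 - Real.exp (-M)) + 2) * Real.exp (-(α * Real.log t)) := by
          ring
end

section
/- The random walk on Z generated by -(-Δ)^α is transient for 0 < α < 1/2 and recurrent for 1/2 ≤ α ≤ 1; equivalently, ∫_1^∞ (1/2π) ∫_{-π}^π exp(-t(4 sin^2(φ/2))^α) dφ dt < ∞ if and only if α < 1/2. -/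
open MeasureTheory Real Set

lemma aux_cont {α : ℝ} (hα0 : 0 < α) :
    Continuous fun φ : ℝ => (4 * Real.sin (φ / 2) ^ 2) ^ α := by
  have hb : Continuous fun φ : ℝ => 4 * Real.sin (φ / 2) ^ 2 := by fun_prop
  rw [continuous_iff_continuousAt]
  intro φ
  exact (Real.continuousAt_rpow_const _ _ (Or.inr hα0.le)).comp hb.continuousAt

lemma aux_jordan {φ : ℝ} (h : |φ| ≤ Real.pi) :
    (φ / Real.pi) ^ 2 ≤ 4 * Real.sin (φ / 2) ^ 2 := by
  have hπ := Real.pi_pos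
  have h1 : |φ| / Real.pi ≤ 2 * |Real.sin (φ / 2)| := by
    have habs : |Real.sin (φ / 2)| = Real.sin (|φ| / 2) := by
      rcases le_total 0 φ with hφ | hφ
      · rw [abs_of_nonneg hφ, abs_of_nonneg]
        exact Real.sin_nonneg_of_nonneg_of_le_pi (by positivity)
          (by rw [abs_of_nonneg hφ] at h; linarith)
      · rw [abs_of_nonpos hφ]
        rw [abs_of_nonpos hφ] at h
        rw [show -φ / 2 = -(φ/2) by ring, Real.sin_neg, abs_of_nonpos]
        exact Real.sin_nonpos_of_nonpos_of_neg_pi_le (by linarith) (by linarith)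
    have := Real.mul_le_sin (x := |φ| / 2) (by positivity) (by linarith)
    rw [habs]
    have heq : 2 / Real.pi * (|φ| / 2) = |φ| / Real.pi := by ring
    rw [heq] at this
    have h0 : 0 ≤ |φ| / Real.pi := by positivity
    linarith
  have h2 : (|φ| / Real.pi) ^ 2 ≤ (2 * |Real.sin (φ / 2)|) ^ 2 :=
    pow_le_pow_left₀ (by positivity) h1 2
  calc (φ / Real.pi) ^ 2 = (|φ| / Real.pi) ^ 2 := by rw [div_pow, div_pow, sq_abs]
    _ ≤ (2 * |Real.sin (φ / 2)|) ^ 2 := h2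
    _ = 4 * Real.sin (φ / 2) ^ 2 := by rw [mul_pow, sq_abs]; ring

lemma aux_integrable {p b : ℝ} (hp : 0 < p) (hb : 0 < b) :
    IntegrableOn (fun x : ℝ => Real.exp (-b * x ^ p)) (Set.Ioi 0) := by
  rw [← integrableOn_Ioi_comp_rpow_iff' (fun x : ℝ => Real.exp (-b * x ^ p))
    (one_div_ne_zero hp.ne')]
  have : IntegrableOn (fun x : ℝ => x ^ (1/p - 1) * Real.exp (-b * x ^ (1:ℝ)))
      (Set.Ioi 0) :=
    integrableOn_rpow_mul_exp_neg_mul_rpow (by simpa using one_div_pos.mpr hp) one_pos hb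
  refine this.congr_fun (fun x hx => ?_) measurableSet_Ioi
  have hx0 : (0:ℝ) < x := hx
  have hxx : (x ^ (1/p)) ^ p = x := by
    rw [← Real.rpow_mul hx0.le, one_div_mul_cancel hp.ne', Real.rpow_one]
  rw [smul_eq_mul, hxx]; simp only [Real.rpow_one]


lemma aux_cont_abs {q : ℝ} (hq0 : 0 < q) : Continuous fun x : ℝ => |x| ^ q := by
  rw [continuous_iff_continuousAt]
  intro x
  exact (Real.continuousAt_rpow_const _ _ (Or.inr hq0.le)).comp continuous_abs.continuousAt

set_option maxHeartbeats 1000000 in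
/-- The random walk on `ℤ` generated by `-(-Δ)^α`, `0 < α ≤ 1`, is transient iff
`α < 1/2`: the diagonal heat kernel `p_α(t,0,0)` is integrable on `[1,∞)` iff `α < 1/2`. -/
theorem fractional_lattice_walk_transience
    (α : ℝ) (hα0 : 0 < α) (hα1 : α ≤ 1) :
    IntegrableOn (fun t : ℝ =>
        (1 / (2 * Real.pi)) *
          ∫ φ in (-Real.pi)..Real.pi, Real.exp (-t * (4 * Real.sin (φ / 2) ^ 2) ^ α))
      (Set.Ici (1 : ℝ)) ↔ α < 1 / 2 := by
  have hπ := Real.pi_pos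
  have hπ1 : (1:ℝ) ≤ Real.pi := by linarith [Real.pi_gt_three]
  set q : ℝ := 2 * α with hq
  have hq0 : 0 < q := by positivity
  set s : ℝ := -q⁻¹ with hs
  have hs0 : s < 0 := by rw [hs]; simp; positivity
  have hsq : s * q = -1 := by rw [hs]; field_simp
  set f : ℝ → ℝ → ℝ := fun t φ => Real.exp (-t * (4 * Real.sin (φ / 2) ^ 2) ^ α) with hfdef
  have hfc : Continuous (Function.uncurry f) := by
    apply Real.continuous_exp.comp
    exact (continuous_fst.neg.mul ((aux_cont hα0).comp continuous_snd))
  have hfct : ∀ t : ℝ, Continuous fun φ => f t φ := fun t => by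
    have := hfc.comp ((continuous_const.prodMk continuous_id) :
      Continuous fun φ : ℝ => ((t, φ) : ℝ × ℝ))
    exact this
  have hFcont : Continuous fun t : ℝ => ∫ φ in (-Real.pi)..Real.pi, f t φ :=
    intervalIntegral.continuous_parametric_intervalIntegral_of_continuous' hfc _ _
  have hF0 : ∀ t : ℝ, 0 ≤ ∫ φ in (-Real.pi)..Real.pi, f t φ := fun t =>
    intervalIntegral.integral_nonneg (by linarith) (fun φ _ => Real.exp_nonneg _)
  have hmeas : AEStronglyMeasurable (fun t : ℝ =>
      (1 / (2 * Real.pi)) * ∫ φ in (-Real.pi)..Real.pi, f t φ)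
      (volume.restrict (Set.Ici (1:ℝ))) :=
    (continuous_const.mul hFcont).aestronglyMeasurable.restrict
  have hmeas_rpow : AEStronglyMeasurable (fun t : ℝ => t ^ s)
      (volume.restrict (Set.Ici (1:ℝ))) := by
    apply ContinuousOn.aestronglyMeasurable _ measurableSet_Ici
    intro t ht
    have ht0 : t ≠ 0 := by intro h; rw [h] at ht; exact absurd ht (by norm_num)
    exact (Real.continuousAt_rpow_const t s (Or.inl ht0)).continuousWithinAt
  constructor
  · -- from integrability deduce α < 1/2
    intro hI
    by_contra hcon
    push_neg at hcon
    have hlow : ∀ t : ℝ, 1 ≤ t →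
        2 * Real.exp (-1) * t ^ s ≤ ∫ φ in (-Real.pi)..Real.pi, f t φ := by
      intro t ht
      have ht0 : (0:ℝ) < t := by linarith
      set r : ℝ := t ^ s with hr
      have hr0 : 0 < r := Real.rpow_pos_of_pos ht0 s
      have hr1 : r ≤ 1 := Real.rpow_le_one_of_one_le_of_nonpos ht hs0.le
      have hrπ : r ≤ Real.pi := by linarith
      have hrq : t * r ^ q = 1 := by
        rw [hr, ← Real.rpow_mul ht0.le, hsq, Real.rpow_neg_one, mul_inv_cancel₀ ht0.ne']
      have step1 : ∫ φ in (-r)..r, Real.exp (-1) ≤ ∫ φ in (-r)..r, f t φ := by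
        apply intervalIntegral.integral_mono_on (by linarith)
          (intervalIntegrable_const) ((hfct t).intervalIntegrable _ _)
        intro φ hφ
        have hφr : φ ^ 2 ≤ r ^ 2 := sq_le_sq' (by linarith [hφ.1]) hφ.2
        have h1 : (4 * Real.sin (φ / 2) ^ 2) ^ α ≤ (r ^ 2) ^ α := by
          apply Real.rpow_le_rpow (by positivity) _ hα0.le
          have := Real.sin_sq_le_sq (x := φ / 2)
          nlinarith
        have h2 : ((r:ℝ) ^ 2) ^ α = r ^ q := by
          rw [← Real.rpow_two, ← Real.rpow_mul hr0.le, hq]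
        have h3 : t * (4 * Real.sin (φ / 2) ^ 2) ^ α ≤ 1 := by
          rw [← hrq]
          exact mul_le_mul_of_nonneg_left (h1.trans_eq h2) ht0.le
        simp only [hfdef]
        apply Real.exp_le_exp.mpr
        nlinarith
      have step2 : ∫ φ in (-r)..r, f t φ ≤ ∫ φ in (-Real.pi)..Real.pi, f t φ := by
        apply intervalIntegral.integral_mono_interval (by linarith) (by linarith) hrπ
        · exact Filter.Eventually.of_forall fun φ => Real.exp_nonneg _
        · exact (hfct t).intervalIntegrable _ _
      have hconst : ∫ φ in (-r)..r, Real.exp (-1) = 2 * Real.exp (-1) * r := by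
        simp [intervalIntegral.integral_const]
        ring
      calc 2 * Real.exp (-1) * t ^ s = ∫ φ in (-r)..r, Real.exp (-1) := by rw [hconst]
        _ ≤ _ := step1.trans step2
    have hmono : IntegrableOn (fun t : ℝ => (1 / (2 * Real.pi) * (2 * Real.exp (-1))) * t ^ s)
        (Set.Ici (1:ℝ)) := by
      apply Integrable.mono' hI (hmeas_rpow.const_mul _)
      rw [ae_restrict_iff' measurableSet_Ici]
      refine Filter.Eventually.of_forall fun t ht => ?_
      have ht1 : (1:ℝ) ≤ t := ht
      have ht0 : (0:ℝ) < t := by linarith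
      have hrp : (0:ℝ) < t ^ s := Real.rpow_pos_of_pos ht0 s
      rw [Real.norm_eq_abs, abs_of_nonneg (by positivity)]
      have hb := hlow t ht1
      have hcpos : (0:ℝ) < 1 / (2 * Real.pi) := by positivity
      calc 1 / (2 * Real.pi) * (2 * Real.exp (-1)) * t ^ s
          = 1 / (2 * Real.pi) * (2 * Real.exp (-1) * t ^ s) := by ring
        _ ≤ 1 / (2 * Real.pi) * ∫ φ in (-Real.pi)..Real.pi, f t φ :=
            mul_le_mul_of_nonneg_left hb hcpos.le
    have hrpow : IntegrableOn (fun t : ℝ => t ^ s) (Set.Ioi (1:ℝ)) := by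
      have hc : (1 / (2 * Real.pi) * (2 * Real.exp (-1))) ≠ 0 := by positivity
      have h2 := hmono.const_mul (1 / (2 * Real.pi) * (2 * Real.exp (-1)))⁻¹
      rw [← integrableOn_Ici_iff_integrableOn_Ioi]
      refine (integrable_congr ?_).mp h2
      refine Filter.Eventually.of_forall fun t => ?_
      simp only
      rw [← mul_assoc, inv_mul_cancel₀ hc, one_mul]
    rw [integrableOn_Ioi_rpow_iff zero_lt_one] at hrpow
    have hq1 : 1 ≤ q := by rw [hq]; linarith
    have hle : q⁻¹ ≤ 1 := by rw [inv_le_one_iff₀]; right; exact hq1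
    rw [hs] at hrpow
    linarith
  · -- transience
    intro hαlt
    have hslt : s < -1 := by
      have : 1 < q⁻¹ := one_lt_inv_iff₀.mpr ⟨hq0, by rw [hq]; linarith⟩
      rw [hs]; linarith
    set K : ℝ := 2 * (Real.pi * Real.Gamma (1 / q + 1)) with hK
    have hup : ∀ t : ℝ, 1 ≤ t →
        (∫ φ in (-Real.pi)..Real.pi, f t φ) ≤ K * t ^ s := by
      intro t ht
      have ht0 : (0:ℝ) < t := by linarith
      set b : ℝ := t * Real.pi ^ (-q) with hb
      have hb0 : 0 < b := by
        rw [hb]; exact mul_pos ht0 (Real.rpow_pos_of_pos hπ _)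
      set g : ℝ → ℝ := fun φ => Real.exp (-b * |φ| ^ q) with hg
      have hgc : Continuous g := by
        apply Real.continuous_exp.comp
        exact continuous_const.mul (aux_cont_abs hq0)
      have stepA : (∫ φ in (-Real.pi)..Real.pi, f t φ) ≤ ∫ φ in (-Real.pi)..Real.pi, g φ := by
        apply intervalIntegral.integral_mono_on (by linarith)
          ((hfct t).intervalIntegrable _ _) (hgc.intervalIntegrable _ _)
        intro φ hφ
        have hφπ : |φ| ≤ Real.pi := abs_le.mpr ⟨hφ.1, hφ.2⟩
        have hkey : b * |φ| ^ q ≤ t * (4 * Real.sin (φ / 2) ^ 2) ^ α := by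
          have h1 : (|φ| / Real.pi) ^ q = ((φ / Real.pi) ^ 2) ^ α := by
            rw [hq, Real.rpow_mul (by positivity), Real.rpow_two]
            congr 1
            rw [div_pow, div_pow, sq_abs]
          have h2 : ((φ / Real.pi) ^ 2) ^ α ≤ (4 * Real.sin (φ / 2) ^ 2) ^ α :=
            Real.rpow_le_rpow (by positivity) (aux_jordan hφπ) hα0.le
          have h3 : b * |φ| ^ q = t * (|φ| / Real.pi) ^ q := by
            rw [hb, Real.div_rpow (abs_nonneg φ) hπ.le, Real.rpow_neg hπ.le]
            ring
          rw [h3, h1]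
          exact mul_le_mul_of_nonneg_left h2 ht0.le
        simp only [hfdef, hg]
        exact Real.exp_le_exp.mpr (by linarith)
      have hsymm : ∫ φ in (-Real.pi)..(0:ℝ), g φ = ∫ φ in (0:ℝ)..Real.pi, g φ := by
        have := intervalIntegral.integral_comp_neg (a := 0) (b := Real.pi) (f := g)
        simp only [neg_zero] at this
        rw [← this]
        congr 1
        ext φ
        rw [hg]
        simp [abs_neg]
      have stepB : ∫ φ in (-Real.pi)..Real.pi, g φ = 2 * ∫ φ in (0:ℝ)..Real.pi, g φ := by
        rw [← intervalIntegral.integral_add_adjacent_intervals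
          (hgc.intervalIntegrable (-Real.pi) 0) (hgc.intervalIntegrable 0 Real.pi), hsymm]
        ring
      have hIoi : IntegrableOn (fun x : ℝ => Real.exp (-b * x ^ q)) (Set.Ioi 0) :=
        aux_integrable hq0 hb0
      have stepC : (∫ φ in (0:ℝ)..Real.pi, g φ) ≤ ∫ x in Set.Ioi (0:ℝ), Real.exp (-b * x ^ q) := by
        rw [intervalIntegral.integral_of_le hπ.le]
        have hcongr : ∫ φ in Set.Ioc (0:ℝ) Real.pi, g φ
            = ∫ φ in Set.Ioc (0:ℝ) Real.pi, Real.exp (-b * φ ^ q) := by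
          apply setIntegral_congr_fun measurableSet_Ioc
          intro x hx
          rw [hg]
          simp only
          rw [abs_of_pos hx.1]
        rw [hcongr]
        apply setIntegral_mono_set hIoi
          (Filter.Eventually.of_forall fun x => Real.exp_nonneg _)
          (HasSubset.Subset.eventuallyLE Ioc_subset_Ioi_self)
      have stepD : ∫ x in Set.Ioi (0:ℝ), Real.exp (-b * x ^ q)
          = (Real.pi * t ^ s) * Real.Gamma (1 / q + 1) := by
        rw [integral_exp_neg_mul_rpow hq0 hb0]
        congr 1
        rw [hb, Real.mul_rpow ht0.le (Real.rpow_pos_of_pos hπ _).le,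
          ← Real.rpow_mul hπ.le]
        have e1 : -q * (-1 / q) = 1 := by field_simp
        have e2 : (-1) / q = s := by rw [hs]; ring
        rw [e1, Real.rpow_one, e2]
        ring
      calc (∫ φ in (-Real.pi)..Real.pi, f t φ) ≤ ∫ φ in (-Real.pi)..Real.pi, g φ := stepA
        _ = 2 * ∫ φ in (0:ℝ)..Real.pi, g φ := stepB
        _ ≤ 2 * ∫ x in Set.Ioi (0:ℝ), Real.exp (-b * x ^ q) := by linarith [stepC]
        _ = K * t ^ s := by rw [stepD, hK]; ring
    -- dominating function
    have hdom : IntegrableOn (fun t : ℝ => (1 / (2 * Real.pi) * K) * t ^ s)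
        (Set.Ici (1:ℝ)) := by
      rw [integrableOn_Ici_iff_integrableOn_Ioi]
      exact (integrableOn_Ioi_rpow_of_lt hslt zero_lt_one).const_mul _
    apply Integrable.mono' hdom hmeas
    rw [ae_restrict_iff' measurableSet_Ici]
    refine Filter.Eventually.of_forall fun t ht => ?_
    have ht1 : (1:ℝ) ≤ t := ht
    have hcpos : (0:ℝ) < 1 / (2 * Real.pi) := by positivity
    rw [Real.norm_eq_abs, abs_of_nonneg (mul_nonneg hcpos.le (hF0 t))]
    calc 1 / (2 * Real.pi) * ∫ φ in (-Real.pi)..Real.pi, f t φ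
        ≤ 1 / (2 * Real.pi) * (K * t ^ s) :=
            mul_le_mul_of_nonneg_left (hup t ht1) hcpos.le
        _ = 1 / (2 * Real.pi) * K * t ^ s := by ring
end

section
/- Consider the 2-D lattice Schrödinger operator H = -Δ - V on ℓ^2(Z^2) with V ≥ 0. If Σ_{x∈Z^2} V(x) = ∞, then H has infinitely many negative eigenvalues. More precisely, for every ε > 0 and every finite set S ⊂ Z^2 there exists a finitely supported ψ: Z^2 → [0,1] with support disjoint from S such that ⟨Hψ, ψ⟩ < 0. -/
open Finset

private def latRad (x : ℤ × ℤ) : ℕ := max x.1.natAbs x.2.natAbs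

private noncomputable def latBox (n : ℕ) : Finset (ℤ × ℤ) :=
  Finset.Icc (-(n:ℤ), -(n:ℤ)) ((n:ℤ), (n:ℤ))

private lemma mem_latBox {x : ℤ × ℤ} {n : ℕ} : x ∈ latBox n ↔ latRad x ≤ n := by
  simp only [latBox, Finset.mem_Icc, Prod.le_def, latRad]
  omega

private lemma card_latBox (n : ℕ) : (latBox n).card = (2*n+1)^2 := by
  rw [latBox, Finset.Icc_prod_def, Finset.card_product]
  simp [Int.card_Icc]
  rw [sq]
  congr 1 <;> omega

private noncomputable def clamp (a : ℝ) : ℝ := max 0 (min 1 a)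

private lemma clamp_nonneg (a : ℝ) : 0 ≤ clamp a := le_max_left _ _

private lemma clamp_le_one (a : ℝ) : clamp a ≤ 1 :=
  max_le zero_le_one (min_le_left _ _)

private lemma clamp_of_one_le {a : ℝ} (h : 1 ≤ a) : clamp a = 1 := by
  rw [clamp, min_eq_left h, max_eq_right zero_le_one]

private lemma clamp_of_nonpos {a : ℝ} (h : a ≤ 0) : clamp a = 0 := by
  rw [clamp, min_eq_right (h.trans zero_le_one), max_eq_left h]

private lemma clamp_lip (a b : ℝ) : |clamp a - clamp b| ≤ |a - b| := by
  calc |clamp a - clamp b| = |min 1 a ⊔ 0 - min 1 b ⊔ 0| := by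
        rw [clamp, clamp, max_comm, max_comm (0:ℝ)]
    _ ≤ |min 1 a - min 1 b| := abs_max_sub_max_le_abs _ _ _
    _ ≤ max |1 - 1| |a - b| := abs_min_sub_min_le_max _ _ _ _
    _ = |a - b| := by simp

private noncomputable def latProf (k l r : ℕ) : ℝ :=
  if r ≤ k then 0 else clamp ((2*l - (r:ℝ))/l)

private noncomputable def latPsi (k l : ℕ) (x : ℤ × ℤ) : ℝ := latProf k l (latRad x)

private lemma latProf_nonneg (k l r : ℕ) : 0 ≤ latProf k l r := by
  unfold latProf; split_ifs
  · exact le_refl 0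
  · exact clamp_nonneg _

private lemma latProf_le_one (k l r : ℕ) : latProf k l r ≤ 1 := by
  unfold latProf; split_ifs
  · exact zero_le_one
  · exact clamp_le_one _

private lemma latProf_of_le {k l r : ℕ} (h : r ≤ k) : latProf k l r = 0 := by
  simp [latProf, h]

private lemma latProf_of_big {k l r : ℕ} (hk : k < l) (h : 2*l ≤ r) :
    latProf k l r = 0 := by
  have hr : ¬ r ≤ k := by omega
  rw [latProf, if_neg hr, clamp_of_nonpos]
  apply div_nonpos_of_nonpos_of_nonneg
  · have : (2*l : ℝ) ≤ r := by exact_mod_cast by omega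
    linarith
  · positivity

private lemma latProf_of_mid {k l r : ℕ} (h1 : k < r) (h2 : r ≤ l) (hl : 0 < l) :
    latProf k l r = 1 := by
  rw [latProf, if_neg (by omega), clamp_of_one_le]
  rw [le_div_iff₀ (by exact_mod_cast hl)]
  have : (r:ℝ) ≤ l := by exact_mod_cast h2
  linarith

private lemma latProf_diff_sq {k l r r' : ℕ} (hl : k + 2 ≤ l)
    (h1 : r' ≤ r + 1) (h2 : r ≤ r' + 1) :
    (latProf k l r - latProf k l r')^2 ≤
      if r ≤ k + 1 then 1 else 1/(l:ℝ)^2 := by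
  split_ifs with h
  · have p0 := latProf_nonneg k l r
    have p1 := latProf_le_one k l r
    have q0 := latProf_nonneg k l r'
    have q1 := latProf_le_one k l r'
    nlinarith
  · have hll : (0:ℝ) < l := by exact_mod_cast (by omega : 0 < l)
    rw [latProf, latProf, if_neg (by omega), if_neg (by omega)]
    have hd : |clamp ((2*l - (r:ℝ))/l) - clamp ((2*l - (r':ℝ))/l)| ≤ 1/(l:ℝ) := by
      refine (clamp_lip _ _).trans ?_
      rw [div_sub_div_same, abs_div, abs_of_pos hll]
      have e1 : ((r':ℝ)) ≤ r + 1 := by exact_mod_cast h1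
      have e2 : ((r:ℝ)) ≤ r' + 1 := by exact_mod_cast h2
      gcongr
      rw [abs_le]; constructor <;> linarith
    calc (clamp ((2*l - (r:ℝ))/l) - clamp ((2*l - (r':ℝ))/l))^2
        = |clamp ((2*l - (r:ℝ))/l) - clamp ((2*l - (r':ℝ))/l)|^2 := (sq_abs _).symm
      _ ≤ (1/(l:ℝ))^2 := by
          apply pow_le_pow_left₀ (abs_nonneg _) hd
      _ = 1/(l:ℝ)^2 := by rw [div_pow, one_pow]

private lemma latRad_shift (x e : ℤ × ℤ) (he : e.1.natAbs ≤ 1 ∧ e.2.natAbs ≤ 1) :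
    latRad (x + e) ≤ latRad x + 1 ∧ latRad x ≤ latRad (x + e) + 1 := by
  obtain ⟨x1, x2⟩ := x; obtain ⟨e1, e2⟩ := e
  simp only [latRad, Prod.mk_add_mk] at *
  omega

/-- The summation-by-parts identity for the quadratic form. -/
private lemma quad_identity (ψ V : ℤ × ℤ → ℝ) (T : Finset (ℤ × ℤ))
    (h0 : ∀ x ∉ T, ψ x = 0) :
    (∑' x : ℤ × ℤ,
      (-(ψ (x + (1,0)) + ψ (x - (1,0)) + ψ (x + (0,1)) + ψ (x - (0,1)) - 4 * ψ x)
        - V x * ψ x) * ψ x)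
    = (∑' x : ℤ × ℤ, (ψ x - ψ (x + (1,0)))^2)
      + (∑' x : ℤ × ℤ, (ψ x - ψ (x + (0,1)))^2)
      - ∑' x : ℤ × ℤ, V x * ψ x ^ 2 := by
  have summ : ∀ g : (ℤ × ℤ) → ℝ, (∀ x, ψ x = 0 → g x = 0) → Summable g := by
    intro g hg
    exact summable_of_ne_finset_zero (s := T) fun x hx => hg x (h0 x hx)
  have summ' : ∀ e : ℤ × ℤ, Summable (fun x => (ψ (x + e) - ψ x) * ψ (x + e)) := by
    intro e
    apply summable_of_ne_finset_zero (s := T.image (fun t => t - e))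
    intro x hx
    have : ψ (x + e) = 0 := by
      apply h0
      intro hmem
      exact hx (Finset.mem_image.mpr ⟨x + e, hmem, by abel⟩)
    simp [this]
  -- shift identity
  have shift : ∀ e : ℤ × ℤ,
      (∑' x : ℤ × ℤ, (ψ x - ψ (x - e)) * ψ x)
        = ∑' x : ℤ × ℤ, (ψ (x + e) - ψ x) * ψ (x + e) := by
    intro e
    rw [← Equiv.tsum_eq (Equiv.addRight e) (fun x => (ψ x - ψ (x - e)) * ψ x)]
    apply tsum_congr
    intro y
    simp [Equiv.addRight]
  have pair : ∀ e : ℤ × ℤ,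
      (∑' x : ℤ × ℤ, (ψ x - ψ (x + e)) * ψ x)
        + (∑' x : ℤ × ℤ, (ψ x - ψ (x - e)) * ψ x)
      = ∑' x : ℤ × ℤ, (ψ x - ψ (x + e))^2 := by
    intro e
    rw [shift e, ← Summable.tsum_add (summ _ (by intro x h; simp [h])) (summ' e)]
    apply tsum_congr
    intro x
    ring
  have key : ∀ x : ℤ × ℤ,
      (-(ψ (x + (1,0)) + ψ (x - (1,0)) + ψ (x + (0,1)) + ψ (x - (0,1)) - 4 * ψ x)
        - V x * ψ x) * ψ x
      = (ψ x - ψ (x + (1,0))) * ψ x + (ψ x - ψ (x - (1,0))) * ψ x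
        + ((ψ x - ψ (x + (0,1))) * ψ x + (ψ x - ψ (x - (0,1))) * ψ x)
        - V x * ψ x ^ 2 := by
    intro x; ring
  have s1 : Summable (fun x => (ψ x - ψ (x + ((1:ℤ),(0:ℤ)))) * ψ x) :=
    summ _ (by intro x h; simp [h])
  have s2 : Summable (fun x => (ψ x - ψ (x - ((1:ℤ),(0:ℤ)))) * ψ x) :=
    summ _ (by intro x h; simp [h])
  have s3 : Summable (fun x => (ψ x - ψ (x + ((0:ℤ),(1:ℤ)))) * ψ x) :=
    summ _ (by intro x h; simp [h])
  have s4 : Summable (fun x => (ψ x - ψ (x - ((0:ℤ),(1:ℤ)))) * ψ x) :=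
    summ _ (by intro x h; simp [h])
  have s5 : Summable (fun x => V x * ψ x ^ 2) :=
    summ _ (by intro x h; simp [h])
  calc (∑' x : ℤ × ℤ,
      (-(ψ (x + (1,0)) + ψ (x - (1,0)) + ψ (x + (0,1)) + ψ (x - (0,1)) - 4 * ψ x)
        - V x * ψ x) * ψ x)
      = ∑' x : ℤ × ℤ,
        ((ψ x - ψ (x + (1,0))) * ψ x + (ψ x - ψ (x - (1,0))) * ψ x
        + ((ψ x - ψ (x + (0,1))) * ψ x + (ψ x - ψ (x - (0,1))) * ψ x)
        - V x * ψ x ^ 2) := tsum_congr key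
    _ = ((∑' x : ℤ × ℤ, (ψ x - ψ (x + (1,0))) * ψ x)
          + (∑' x : ℤ × ℤ, (ψ x - ψ (x - (1,0))) * ψ x))
        + ((∑' x : ℤ × ℤ, (ψ x - ψ (x + (0,1))) * ψ x)
          + (∑' x : ℤ × ℤ, (ψ x - ψ (x - (0,1))) * ψ x))
        - ∑' x : ℤ × ℤ, V x * ψ x ^ 2 := by
        rw [Summable.tsum_sub (((s1.add s2).add (s3.add s4))) s5,
            Summable.tsum_add (s1.add s2) (s3.add s4), Summable.tsum_add s1 s2, Summable.tsum_add s3 s4]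
    _ = _ := by rw [pair (1,0), pair (0,1)]

/-- For the 2-D lattice Schrödinger operator `H = -Δ - V` with `V ≥ 0` and
`Σ_{x∈ℤ²} V(x) = ∞`: for every `ε > 0` and every finite set `S ⊂ ℤ²` there is a
finitely supported `ψ : ℤ² → [0,1]` with support disjoint from `S` and `⟨Hψ,ψ⟩ < 0`
(so that `H` has infinitely many negative eigenvalues). -/
theorem lattice_2d_infinite_negative_spectrum
    (V : ℤ × ℤ → ℝ) (hV : ∀ x, 0 ≤ V x) (hdiv : ¬ Summable V) :
    ∀ ε : ℝ, 0 < ε → ∀ S : Finset (ℤ × ℤ),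
      ∃ ψ : ℤ × ℤ → ℝ,
        (Function.support ψ).Finite ∧
        (∀ x, 0 ≤ ψ x ∧ ψ x ≤ 1) ∧
        (∀ x ∈ S, ψ x = 0) ∧
        (∑' x : ℤ × ℤ,
          (-(ψ (x.1 + 1, x.2) + ψ (x.1 - 1, x.2) + ψ (x.1, x.2 + 1) + ψ (x.1, x.2 - 1)
              - 4 * ψ x) - V x * ψ x) * ψ x) < 0 := by
  intro ε hε S
  set k : ℕ := S.sup latRad with hk
  set E : ℝ := 2*((2*(k:ℝ)+3)^2) + 50 with hE
  -- find a finite set with large potential sum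
  have hF : ∃ F : Finset (ℤ × ℤ), E + ∑ x ∈ latBox k, V x < ∑ x ∈ F, V x := by
    by_contra hc
    push_neg at hc
    exact hdiv (summable_of_sum_le (fun x => hV x) hc)
  obtain ⟨F, hF⟩ := hF
  set l : ℕ := max (k + 2) (F.sup latRad) with hl
  have hkl : k + 2 ≤ l := le_max_left _ _
  have hlpos : (0:ℝ) < l := by exact_mod_cast (by omega : 0 < l)
  set ψ : ℤ × ℤ → ℝ := latPsi k l with hψ
  have hψ0 : ∀ x : ℤ × ℤ, 2*l ≤ latRad x → ψ x = 0 := fun x hx =>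
    latProf_of_big (by omega) hx
  have hψS : ∀ x : ℤ × ℤ, latRad x ≤ k → ψ x = 0 := fun x hx => latProf_of_le hx
  have hbdd : ∀ x, 0 ≤ ψ x ∧ ψ x ≤ 1 := fun x =>
    ⟨latProf_nonneg _ _ _, latProf_le_one _ _ _⟩
  have hsupp : ∀ x ∉ latBox (2*l), ψ x = 0 := by
    intro x hx
    have := mem_latBox.not.mp hx
    exact hψ0 x (by omega)
  refine ⟨ψ, ?_, hbdd, ?_, ?_⟩
  · apply Set.Finite.subset (latBox (2*l)).finite_toSet
    intro x hx
    by_contra hmem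
    exact hx (hsupp x (by simpa using hmem))
  · intro x hxS
    exact hψS x (Finset.le_sup (f := latRad) hxS)
  · -- rewrite the sum
    have hrw : (∑' x : ℤ × ℤ,
          (-(ψ (x.1 + 1, x.2) + ψ (x.1 - 1, x.2) + ψ (x.1, x.2 + 1) + ψ (x.1, x.2 - 1)
              - 4 * ψ x) - V x * ψ x) * ψ x)
        = (∑' x : ℤ × ℤ,
          (-(ψ (x + (1,0)) + ψ (x - (1,0)) + ψ (x + (0,1)) + ψ (x - (0,1))
              - 4 * ψ x) - V x * ψ x) * ψ x) := by
      apply tsum_congr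
      intro x
      obtain ⟨x1, x2⟩ := x
      norm_num [Prod.mk_add_mk, Prod.mk_sub_mk]
    rw [hrw, quad_identity ψ V (latBox (2*l)) hsupp]
    -- energy bounds
    have energy : ∀ e : ℤ × ℤ, e.1.natAbs ≤ 1 → e.2.natAbs ≤ 1 →
        (∑' x : ℤ × ℤ, (ψ x - ψ (x + e))^2) ≤ (2*(k:ℝ)+3)^2 + 25 := by
      intro e he1 he2
      have hzero : ∀ x ∉ latBox (2*l), (ψ x - ψ (x + e))^2 = 0 := by
        intro x hx
        have hr : 2*l + 1 ≤ latRad x := by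
          have := mem_latBox.not.mp hx; omega
        have h1 := hψ0 x (by omega)
        have h2 : ψ (x + e) = 0 := by
          apply hψ0
          have := (latRad_shift x e ⟨he1, he2⟩).2
          omega
        rw [h1, h2]; ring
      rw [tsum_eq_sum hzero]
      have hpt : ∀ x ∈ latBox (2*l), (ψ x - ψ (x + e))^2 ≤
          (if x ∈ latBox (k+1) then (1:ℝ) else 0) + 1/(l:ℝ)^2 := by
        intro x _
        have hval : (ψ x - ψ (x + e))^2
            = (latProf k l (latRad x) - latProf k l (latRad (x+e)))^2 := rfl
        rw [hval]
        have hsh := latRad_shift x e ⟨he1, he2⟩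
        have := latProf_diff_sq (k := k) (l := l) hkl hsh.1 hsh.2
        by_cases hc : latRad x ≤ k + 1
        · rw [if_pos hc] at this
          rw [if_pos (mem_latBox.mpr hc)]
          have : (0:ℝ) ≤ 1/(l:ℝ)^2 := by positivity
          nlinarith [latProf_diff_sq (k := k) (l := l) hkl hsh.1 hsh.2]
        · rw [if_neg hc] at this
          rw [if_neg (fun h => hc (mem_latBox.mp h))]
          linarith
      calc ∑ x ∈ latBox (2*l), (ψ x - ψ (x + e))^2
          ≤ ∑ x ∈ latBox (2*l), ((if x ∈ latBox (k+1) then (1:ℝ) else 0) + 1/(l:ℝ)^2) :=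
            Finset.sum_le_sum hpt
        _ = (∑ x ∈ latBox (2*l), if x ∈ latBox (k+1) then (1:ℝ) else 0)
            + (latBox (2*l)).card * (1/(l:ℝ)^2) := by
            rw [Finset.sum_add_distrib, Finset.sum_const, nsmul_eq_mul]
        _ ≤ (2*(k:ℝ)+3)^2 + 25 := by
            have h1 : (∑ x ∈ latBox (2*l), if x ∈ latBox (k+1) then (1:ℝ) else 0)
                ≤ (2*(k:ℝ)+3)^2 := by
              rw [Finset.sum_ite_mem]
              rw [Finset.sum_const, nsmul_eq_mul, mul_one]
              have : (latBox (2*l) ∩ latBox (k+1)).card ≤ (latBox (k+1)).card :=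
                Finset.card_le_card (Finset.inter_subset_right)
              calc ((latBox (2*l) ∩ latBox (k+1)).card : ℝ)
                  ≤ ((latBox (k+1)).card : ℝ) := by exact_mod_cast this
                _ = ((2*(k+1)+1 : ℕ)^2 : ℝ) := by rw [card_latBox]; norm_cast
                _ = (2*(k:ℝ)+3)^2 := by push_cast; ring
            have h2 : ((latBox (2*l)).card : ℝ) * (1/(l:ℝ)^2) ≤ 25 := by
              rw [card_latBox]
              have hcast : (((2*(2*l)+1)^2 : ℕ) : ℝ) = (4*(l:ℝ)+1)^2 := by
                push_cast; ring
              rw [hcast]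
              rw [mul_one_div, div_le_iff₀ (by positivity)]
              have hl1 : (1:ℝ) ≤ l := by exact_mod_cast (by omega : 1 ≤ l)
              nlinarith
            linarith
    -- potential bound
    set A : Finset (ℤ × ℤ) := latBox l \ latBox k with hA
    have hA1 : ∀ x ∈ A, ψ x = 1 := by
      intro x hx
      rw [hA, Finset.mem_sdiff, mem_latBox, mem_latBox] at hx
      exact latProf_of_mid (by omega) hx.1 (by omega)
    have hVsum : Summable (fun x => V x * ψ x ^ 2) := by
      apply summable_of_ne_finset_zero (s := latBox (2*l))
      intro x hx
      rw [hsupp x hx]; ring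
    have potential : (∑ x ∈ A, V x) ≤ ∑' x : ℤ × ℤ, V x * ψ x ^ 2 := by
      have : (∑ x ∈ A, V x) = ∑ x ∈ A, V x * ψ x ^ 2 := by
        apply Finset.sum_congr rfl
        intro x hx
        rw [hA1 x hx]; ring
      rw [this]
      apply Summable.sum_le_tsum A (fun x _ => mul_nonneg (hV x) (sq_nonneg _)) hVsum
    have hAV : E < ∑ x ∈ A, V x := by
      have hFsub : F ⊆ latBox l := by
        intro x hx
        rw [mem_latBox]
        exact le_trans (Finset.le_sup (f := latRad) hx) (le_max_right _ _)
      have split : ∑ x ∈ F ∩ latBox k, V x + ∑ x ∈ F \ latBox k, V x = ∑ x ∈ F, V x :=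
        Finset.sum_inter_add_sum_sdiff F (latBox k) V
      have h1 : ∑ x ∈ F ∩ latBox k, V x ≤ ∑ x ∈ latBox k, V x :=
        Finset.sum_le_sum_of_subset_of_nonneg Finset.inter_subset_right
          (fun x _ _ => hV x)
      have h2 : ∑ x ∈ F \ latBox k, V x ≤ ∑ x ∈ A, V x := by
        apply Finset.sum_le_sum_of_subset_of_nonneg
        · intro x hx
          rw [Finset.mem_sdiff] at hx ⊢
          exact ⟨hFsub hx.1, hx.2⟩
        · exact fun x _ _ => hV x
      linarith
    have e1 := energy (1,0) (by norm_num) (by norm_num)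
    have e2 := energy (0,1) (by norm_num) (by norm_num)
    have : E = ((2*(k:ℝ)+3)^2 + 25) + ((2*(k:ℝ)+3)^2 + 25) := by rw [hE]; ring
    linarith
end
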